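/- arXiv:1509.04669 — 5 statements merged into one kernel-verified Lean document; each statement's English description precedes it below -/
import Mathlib

section
/- Let (X,d) be a metric space and Γ a group acting on X by homeomorphisms, with a finite generating set S, and let d_Γ be the warped metric (the greatest metric satisfying d_Γ(x,x') ≤ d(x,x') and d_Γ(x,sx) ≤ 1 for all s ∈ S). Then d_Γ(x,x') is the infimum over all finite sequences x = x₀, x₁, …, x_N = x' in X and γ₀, …, γ_{N−1} in Γ of the sums ∑_{i=0}^{N−1} (|γ_i| + d(γ_i x_i, x_{i+1})), where |γ| denotes the word length of γ with respect to S. -/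
open scoped BigOperators

/-- Word length of `g` with respect to the generating set `S` (symmetrised). -/
noncomputable def wordLength {G : Type*} [Group G] (S : Set G) (g : G) : ℕ :=
  sInf {n : ℕ | ∃ f : Fin n → G, (∀ i, f i ∈ S ∨ (f i)⁻¹ ∈ S) ∧ (List.ofFn f).prod = g}

/-- The set of sums `∑ (|γᵢ| + d(γᵢ xᵢ, xᵢ₊₁))` over finite chains from `x` to `x'`. -/
def chainSums {G : Type*} [Group G] {X : Type*} (S : Set G) (act : G → X → X)
    (d : X → X → ℝ) (x x' : X) : Set ℝ :=
  {c | ∃ (N : ℕ) (xs : Fin (N + 1) → X) (γs : Fin N → G),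
    xs 0 = x ∧ xs (Fin.last N) = x' ∧
    c = ∑ i : Fin N, ((wordLength S (γs i) : ℝ) + d (act (γs i) (xs i.castSucc)) (xs i.succ))}

section Aux

variable {G : Type*} [Group G] {X : Type*}

lemma wordLength_one (S : Set G) : wordLength S (1 : G) = 0 := by
  apply Nat.sInf_eq_zero.mpr
  left
  exact ⟨fun i => i.elim0, fun i => i.elim0, by simp⟩

lemma wordLength_le_one (S : Set G) {s : G} (hs : s ∈ S ∨ s⁻¹ ∈ S) : wordLength S s ≤ 1 :=
  Nat.sInf_le ⟨fun _ => s, fun _ => hs, by simp⟩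

lemma wordLength_spec (S : Set G) (hSgen : Subgroup.closure S = ⊤) (g : G) :
    ∃ f : Fin (wordLength S g) → G,
      (∀ i, f i ∈ S ∨ (f i)⁻¹ ∈ S) ∧ (List.ofFn f).prod = g := by
  have hne : {n : ℕ | ∃ f : Fin n → G,
      (∀ i, f i ∈ S ∨ (f i)⁻¹ ∈ S) ∧ (List.ofFn f).prod = g}.Nonempty := by
    have hg : g ∈ Subgroup.closure S := hSgen ▸ Subgroup.mem_top g
    have hg' : g ∈ Submonoid.closure (S ∪ S⁻¹) := by
      rw [← Subgroup.closure_toSubmonoid]; exact hg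
    obtain ⟨l, hl, hlp⟩ := Submonoid.exists_list_of_mem_closure hg'
    refine ⟨l.length, l.get, fun i => ?_, by rw [List.ofFn_get]; exact hlp⟩
    rcases hl (l.get i) (List.get_mem l i) with h | h
    · exact Or.inl h
    · exact Or.inr (Set.mem_inv.mp h)
  exact Nat.sInf_mem hne

/-- One-step extension of a chain at the end. -/
lemma chainSums_snoc (S : Set G) (act : G → X → X) (d : X → X → ℝ) {x y : X} {c : ℝ}
    (hc : c ∈ chainSums S act d x y) (γ : G) (w : X) :
    c + ((wordLength S γ : ℝ) + d (act γ y) w) ∈ chainSums S act d x w := by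
  obtain ⟨N, xs, γs, h0, hl, rfl⟩ := hc
  refine ⟨N + 1, Fin.snoc xs w, Fin.snoc γs γ, ?_, ?_, ?_⟩
  · rw [show (0 : Fin (N + 2)) = Fin.castSucc 0 by simp, Fin.snoc_castSucc, h0]
  · simp
  · rw [Fin.sum_univ_castSucc]
    congr 1
    · refine Finset.sum_congr rfl fun i _ => ?_
      rw [Fin.snoc_castSucc, Fin.snoc_castSucc, Fin.succ_castSucc, Fin.snoc_castSucc]
    · rw [Fin.snoc_last, Fin.snoc_castSucc, hl, Fin.succ_last, Fin.snoc_last]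

/-- Concatenation of chains. -/
lemma chainSums_concat (S : Set G) (act : G → X → X) (d : X → X → ℝ) {x : X} {b : ℝ} :
    ∀ (M : ℕ) (ys : Fin (M + 1) → X) (δs : Fin M → G),
      b ∈ chainSums S act d x (ys 0) →
      b + ∑ i : Fin M, ((wordLength S (δs i) : ℝ) + d (act (δs i) (ys i.castSucc)) (ys i.succ))
        ∈ chainSums S act d x (ys (Fin.last M)) := by
  intro M
  induction M with
  | zero =>
    intro ys δs hb
    simpa using hb
  | succ M ih =>
    intro ys δs hb
    have h1 := ih (ys ∘ Fin.castSucc) (δs ∘ Fin.castSucc) (by simpa using hb)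
    have h2 := chainSums_snoc S act d h1 (δs (Fin.last M)) (ys (Fin.last (M + 1)))
    rw [Fin.sum_univ_castSucc, ← add_assoc]
    convert h2 using 3
    all_goals simp [Fin.succ_last]

lemma chainSums_mem_trans (S : Set G) (act : G → X → X) (d : X → X → ℝ) {x y z : X} {b c : ℝ}
    (hb : b ∈ chainSums S act d x y) (hc : c ∈ chainSums S act d y z) :
    b + c ∈ chainSums S act d x z := by
  obtain ⟨M, ys, δs, h0, hl, rfl⟩ := hc
  subst h0 hl
  exact chainSums_concat S act d M ys δs hb

/-- The one-step chain. -/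
lemma chainSums_single (S : Set G) (act : G → X → X) (d : X → X → ℝ) (γ : G) (a b : X) :
    ((wordLength S γ : ℝ) + d (act γ a) b) ∈ chainSums S act d a b := by
  refine ⟨1, ![a, b], fun _ => γ, rfl, rfl, ?_⟩
  simp [Fin.sum_univ_one]

lemma chainSums_nonneg (S : Set G) (act : G → X → X) [MetricSpace X] {a b : X} {c : ℝ}
    (hc : c ∈ chainSums S act dist a b) : 0 ≤ c := by
  obtain ⟨N, xs, γs, _, _, rfl⟩ := hc
  exact Finset.sum_nonneg fun i _ =>
    add_nonneg (Nat.cast_nonneg _) dist_nonneg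

end Aux

/-- the warped metric (the greatest metric below `d` with `d_Γ(x,sx) ≤ 1`)
is given by the infimum of chain sums. -/
theorem warped_metric_chain_formula {X : Type*} [MetricSpace X] {G : Type*} [Group G]
    (S : Set G) (hSfin : S.Finite) (hSgen : Subgroup.closure S = ⊤)
    (act : G → X → X)
    (hact1 : ∀ x, act 1 x = x) (hactmul : ∀ g h x, act (g * h) x = act g (act h x))
    (hcont : ∀ g, Continuous (act g))
    (dΓ : X → X → ℝ)
    (hmetric : (∀ x y, 0 ≤ dΓ x y) ∧ (∀ x y, dΓ x y = 0 ↔ x = y) ∧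
      (∀ x y, dΓ x y = dΓ y x) ∧ (∀ x y z, dΓ x z ≤ dΓ x y + dΓ y z))
    (hle : ∀ x y, dΓ x y ≤ dist x y)
    (hgen : ∀ x, ∀ s ∈ S, dΓ x (act s x) ≤ 1)
    (hgreatest : ∀ ρ : X → X → ℝ,
      ((∀ x y, 0 ≤ ρ x y) ∧ (∀ x y, ρ x y = 0 ↔ x = y) ∧
        (∀ x y, ρ x y = ρ y x) ∧ (∀ x y z, ρ x z ≤ ρ x y + ρ y z)) →
      (∀ x y, ρ x y ≤ dist x y) → (∀ x, ∀ s ∈ S, ρ x (act s x) ≤ 1) →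
      ∀ x y, ρ x y ≤ dΓ x y) :
    ∀ x x' : X, dΓ x x' = sInf (chainSums S act dist x x') := by
  obtain ⟨hpos, hzero, hsymm, htri⟩ := hmetric
  have hrefl : ∀ x : X, dΓ x x = 0 := fun x => (hzero x x).mpr rfl
  -- dΓ x (act g x) ≤ wordLength
  have hlist : ∀ l : List G, (∀ s ∈ l, s ∈ S ∨ s⁻¹ ∈ S) → ∀ x : X,
      dΓ x (act l.prod x) ≤ l.length := by
    intro l
    induction l with
    | nil => intro _ x; simp [hact1, hrefl]
    | cons a l ih =>
      intro h x
      have cancel : ∀ (g : G) (y : X), act g⁻¹ (act g y) = y := fun g y => by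
        rw [← hactmul, inv_mul_cancel, hact1]
      have h1 : dΓ (act l.prod x) (act a (act l.prod x)) ≤ 1 := by
        rcases h a List.mem_cons_self with ha | ha
        · exact hgen _ a ha
        · have := hgen (act a (act l.prod x)) a⁻¹ ha
          rw [cancel] at this
          rw [hsymm]; exact this
      calc dΓ x (act (a :: l).prod x) = dΓ x (act a (act l.prod x)) := by
            rw [List.prod_cons, hactmul]
        _ ≤ dΓ x (act l.prod x) + dΓ (act l.prod x) (act a (act l.prod x)) := htri _ _ _
        _ ≤ (l.length : ℝ) + 1 := add_le_add (ih (fun s hs => h s (List.mem_cons_of_mem a hs)) x) h1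
        _ = ((a :: l).length : ℝ) := by push_cast [List.length_cons]; ring
  have hword : ∀ (g : G) (x : X), dΓ x (act g x) ≤ (wordLength S g : ℝ) := by
    intro g x
    obtain ⟨f, hf, hfp⟩ := wordLength_spec S hSgen g
    have := hlist (List.ofFn f) (by
      intro s hs
      obtain ⟨i, rfl⟩ := List.mem_ofFn.mp hs
      exact hf i) x
    rwa [hfp, List.length_ofFn] at this
  -- dΓ below each chain sum
  have hchain : ∀ (N : ℕ) (xs : Fin (N + 1) → X) (γs : Fin N → G),
      dΓ (xs 0) (xs (Fin.last N)) ≤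
        ∑ i : Fin N, ((wordLength S (γs i) : ℝ) + dist (act (γs i) (xs i.castSucc)) (xs i.succ)) := by
    intro N
    induction N with
    | zero => intro xs γs; simp [hrefl]
    | succ N ih =>
      intro xs γs
      have h1 := ih (xs ∘ Fin.castSucc) (γs ∘ Fin.castSucc)
      have h2 : dΓ (xs (Fin.last N).castSucc) (xs (Fin.last (N + 1))) ≤
          (wordLength S (γs (Fin.last N)) : ℝ) +
            dist (act (γs (Fin.last N)) (xs (Fin.last N).castSucc)) (xs (Fin.last (N + 1))) :=
        le_trans (htri _ (act (γs (Fin.last N)) (xs (Fin.last N).castSucc)) _)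
          (add_le_add (hword _ _) (hle _ _))
      calc dΓ (xs 0) (xs (Fin.last (N + 1)))
          ≤ dΓ (xs 0) (xs (Fin.last N).castSucc) + dΓ (xs (Fin.last N).castSucc)
            (xs (Fin.last (N + 1))) := htri _ _ _
        _ ≤ (∑ i : Fin N, ((wordLength S (γs i.castSucc) : ℝ) +
              dist (act (γs i.castSucc) (xs i.castSucc.castSucc)) (xs i.castSucc.succ))) +
            ((wordLength S (γs (Fin.last N)) : ℝ) +
              dist (act (γs (Fin.last N)) (xs (Fin.last N).castSucc)) (xs (Fin.last (N + 1)))) := by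
            exact add_le_add h1 h2
        _ = _ := by
            rw [Fin.sum_univ_castSucc, Fin.succ_last]
  -- basic facts about the inf
  have hne : ∀ a b : X, (chainSums S act dist a b).Nonempty :=
    fun a b => ⟨_, chainSums_single S act dist 1 a b⟩
  have hbdd : ∀ a b : X, BddBelow (chainSums S act dist a b) :=
    fun a b => ⟨0, fun c hc => chainSums_nonneg S act hc⟩
  set ρ : X → X → ℝ := fun a b => sInf (chainSums S act dist a b) with hρ
  have hdle : ∀ a b : X, dΓ a b ≤ ρ a b := by
    intro a b
    refine le_csInf (hne a b) fun c hc => ?_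
    obtain ⟨N, xs, γs, h0, hl, rfl⟩ := hc
    subst h0 hl
    exact hchain N xs γs
  have hρd : ∀ a b : X, ρ a b ≤ dist a b := by
    intro a b
    have h := chainSums_single S act dist 1 a b
    rw [wordLength_one, hact1] at h
    have := csInf_le (hbdd a b) h
    simpa using this
  have hρnn : ∀ a b : X, 0 ≤ ρ a b := fun a b =>
    le_trans (hpos a b) (hdle a b)
  have hρgen : ∀ a : X, ∀ s ∈ S, ρ a (act s a) ≤ 1 := by
    intro a s hs
    have h := chainSums_single S act dist s a (act s a)
    have := csInf_le (hbdd a (act s a)) h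
    calc ρ a (act s a) ≤ (wordLength S s : ℝ) + dist (act s a) (act s a) := this
      _ = (wordLength S s : ℝ) := by simp
      _ ≤ 1 := by exact_mod_cast wordLength_le_one S (Or.inl hs)
  have hρgen' : ∀ a : X, ∀ s ∈ S, ρ (act s a) a ≤ 1 := by
    intro a s hs
    have h := chainSums_single S act dist s⁻¹ (act s a) a
    rw [← hactmul, inv_mul_cancel, hact1] at h
    have := csInf_le (hbdd (act s a) a) h
    calc ρ (act s a) a ≤ (wordLength S s⁻¹ : ℝ) + dist a a := this
      _ = (wordLength S s⁻¹ : ℝ) := by simp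
      _ ≤ 1 := by exact_mod_cast wordLength_le_one S (Or.inr (by simpa using hs))
  have hρtri : ∀ a b c : X, ρ a c ≤ ρ a b + ρ b c := by
    intro a b c
    have key : ∀ u ∈ chainSums S act dist a b, ∀ v ∈ chainSums S act dist b c,
        ρ a c ≤ u + v := fun u hu v hv =>
      csInf_le (hbdd a c) (chainSums_mem_trans S act dist hu hv)
    have h1 : ∀ v ∈ chainSums S act dist b c, ρ a c - v ≤ ρ a b := by
      intro v hv
      refine le_csInf (hne a b) fun u hu => ?_
      linarith [key u hu v hv]
    have h2 : ρ a c - ρ a b ≤ ρ b c := by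
      refine le_csInf (hne b c) fun v hv => ?_
      linarith [h1 v hv]
    linarith
  -- the symmetrised candidate
  set σ : X → X → ℝ := fun a b => (ρ a b + ρ b a) / 2 with hσ
  have hσmetric : (∀ x y, 0 ≤ σ x y) ∧ (∀ x y, σ x y = 0 ↔ x = y) ∧
      (∀ x y, σ x y = σ y x) ∧ (∀ x y z, σ x z ≤ σ x y + σ y z) := by
    refine ⟨fun x y => by have := hρnn x y; have := hρnn y x; simp only [hσ]; linarith, fun x y => ?_, fun x y => by simp only [hσ]; ring,
      fun x y z => ?_⟩
    · constructor
      · intro h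
        have h1 : dΓ x y ≤ σ x y := by
          have := hdle x y
          have := hdle y x
          have := hsymm x y
          simp only [hσ]; linarith
        have : dΓ x y = 0 := le_antisymm (h ▸ h1) (hpos x y)
        exact (hzero x y).mp this
      · rintro rfl
        have h1 : ρ x x ≤ 0 := le_trans (hρd x x) (by simp)
        have h2 : ρ x x = 0 := le_antisymm h1 (hρnn x x)
        simp [hσ, h2]
    · have := hρtri x y z
      have := hρtri z y x
      simp only [hσ]; linarith
  have hσle : ∀ x y, σ x y ≤ dist x y := by
    intro x y
    have h1 := hρd x y
    have h2 := hρd y x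
    rw [dist_comm y x] at h2
    simp only [hσ]; linarith
  have hσgen : ∀ x, ∀ s ∈ S, σ x (act s x) ≤ 1 := by
    intro x s hs
    have h1 := hρgen x s hs
    have h2 := hρgen' x s hs
    simp only [hσ]; linarith
  have hfinal := hgreatest σ hσmetric hσle hσgen
  intro x x'
  refine le_antisymm (hdle x x') ?_
  have h1 := hfinal x x'
  have h2 := hdle x' x
  have h3 := hsymm x x'
  simp only [hσ] at h1
  show ρ x x' ≤ dΓ x x'
  linarith
end

section
/- Let f: R₊ → R₊ be nondecreasing and unbounded with liminf_{s→0⁺} f(s)/s > 0. Then there exists a nondecreasing, unbounded function c: R₊ → R₊ with c ≤ f and c(θr) ≥ θ·c(r) for all θ ∈ [0,1] and r ≥ 0. -/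
open Filter

/-- Lemma on concave-like minorants: if `f : ℝ₊ → ℝ₊` is nondecreasing,
unbounded, and `liminf_{s→0⁺} f(s)/s > 0`, then there is a nondecreasing unbounded
`c ≤ f` with `c(θr) ≥ θ·c(r)` for all `θ ∈ [0,1]`, `r ≥ 0`. -/
theorem exists_scaling_minorant (f : ℝ → ℝ)
    (hf0 : ∀ s, 0 ≤ s → 0 ≤ f s)
    (hmono : MonotoneOn f (Set.Ici (0 : ℝ)))
    (hunb : Tendsto f atTop atTop)
    (hliminf : ∃ ε > 0, ∀ᶠ s in nhdsWithin 0 (Set.Ioi 0), ε ≤ f s / s) :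
    ∃ c : ℝ → ℝ,
      (∀ s, 0 ≤ s → 0 ≤ c s) ∧
      MonotoneOn c (Set.Ici (0 : ℝ)) ∧
      Tendsto c atTop atTop ∧
      (∀ r, 0 ≤ r → c r ≤ f r) ∧
      (∀ θ ∈ Set.Icc (0 : ℝ) 1, ∀ r, 0 ≤ r → θ * c r ≤ c (θ * r)) := by
  set S : ℝ → Set ℝ := fun t => (fun s => f s / s) '' Set.Ioc 0 t with hS
  set m : ℝ → ℝ := fun t => sInf (S t) with hm
  set c : ℝ → ℝ := fun t => t * m t with hc
  have hSnonneg : ∀ t, ∀ x ∈ S t, (0:ℝ) ≤ x := by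
    rintro t x ⟨s, hs, rfl⟩
    exact div_nonneg (hf0 s hs.1.le) hs.1.le
  have hbdd : ∀ t, BddBelow (S t) := fun t => ⟨0, fun x hx => hSnonneg t x hx⟩
  have hSne : ∀ t, 0 < t → (S t).Nonempty := fun t ht =>
    ⟨f t / t, t, ⟨ht, le_rfl⟩, rfl⟩
  have hmnonneg : ∀ t, 0 ≤ m t := fun t => Real.sInf_nonneg (hSnonneg t)
  have hmle : ∀ s t, 0 < s → s ≤ t → m t ≤ f s / s := fun s t hs hst =>
    csInf_le (hbdd t) ⟨s, ⟨hs, hst⟩, rfl⟩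
  have hanti : ∀ a b : ℝ, 0 < a → a ≤ b → m b ≤ m a := fun a b ha hab =>
    csInf_le_csInf (hbdd b) (hSne a ha)
      (Set.image_mono (Set.Ioc_subset_Ioc_right hab))
  have hcnonneg : ∀ s, 0 ≤ s → 0 ≤ c s := fun s hs =>
    mul_nonneg hs (hmnonneg s)
  -- monotonicity
  have hcmono : MonotoneOn c (Set.Ici (0:ℝ)) := by
    rintro a (ha : (0:ℝ) ≤ a) b (hb : (0:ℝ) ≤ b) hab
    rcases ha.eq_or_lt with rfl | ha'
    · have h0 : c 0 = 0 := zero_mul _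
      rw [h0]; exact hcnonneg b hb
    · have hb' : 0 < b := lt_of_lt_of_le ha' hab
      have key : a * m a / b ≤ m b := by
        apply le_csInf (hSne b hb')
        rintro x ⟨s, ⟨hs0, hsb⟩, rfl⟩
        rw [div_le_div_iff₀ hb' hs0]
        rcases le_or_gt s a with hsa | has
        · have h1 : m a ≤ f s / s := hmle s a hs0 hsa
          have h2 : f s / s * s = f s := div_mul_cancel₀ _ hs0.ne'
          nlinarith [hf0 s hs0.le, mul_le_mul_of_nonneg_right h1 hs0.le]
        · have h1 : m a ≤ f a / a := hmle a a ha' le_rfl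
          have h2 : f a ≤ f s := hmono (le_of_lt ha') (le_trans ha'.le has.le) has.le
          have h3 : a * m a ≤ f a := by
            have := mul_le_mul_of_nonneg_left h1 ha'.le
            rwa [mul_div_cancel₀ _ ha'.ne'] at this
          nlinarith [hf0 s hs0.le, mul_nonneg (hcnonneg a ha'.le) hs0.le]
      calc a * m a = b * (a * m a / b) := by field_simp
        _ ≤ b * m b := mul_le_mul_of_nonneg_left key hb'.le
  -- tendsto atTop
  have hctop : Tendsto c atTop atTop := by
    rw [tendsto_atTop]
    intro M
    obtain ⟨ε, hε, hev⟩ := hliminf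
    rw [eventually_nhdsWithin_iff, Metric.eventually_nhds_iff] at hev
    obtain ⟨δ, hδ, hδε⟩ := hev
    set K : ℝ := max M 1 with hK
    have hK0 : 0 < K := lt_of_lt_of_le one_pos (le_max_right _ _)
    obtain ⟨T, hT⟩ := (hunb.eventually_ge_atTop K).exists_forall_of_atTop
    set T' : ℝ := max T δ with hT'
    have hT'0 : 0 < T' := lt_of_lt_of_le hδ (le_max_right _ _)
    have hfδ : ε * (δ/2) ≤ f (δ/2) := by
      have h1 : dist (δ/2) 0 < δ := by
        rw [Real.dist_eq, sub_zero, abs_of_pos (by linarith)]; linarith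
      have h2 := hδε h1 (by simp only [Set.mem_Ioi]; linarith)
      rw [le_div_iff₀ (by linarith)] at h2
      linarith
    set a : ℝ := min ε (ε * (δ/2) / T') with ha
    have ha0 : 0 < a := lt_min hε (div_pos (mul_pos hε (by linarith)) hT'0)
    filter_upwards [eventually_ge_atTop (max T' (K / a))] with t ht
    have ht1 : T' ≤ t := le_trans (le_max_left _ _) ht
    have ht2 : K / a ≤ t := le_trans (le_max_right _ _) ht
    have ht0 : 0 < t := lt_of_lt_of_le hT'0 ht1
    have hKat : K ≤ a * t := by
      rw [div_le_iff₀ ha0] at ht2; linarith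
    have hmt : K / t ≤ m t := by
      apply le_csInf (hSne t ht0)
      rintro x ⟨s, ⟨hs0, hst⟩, rfl⟩
      rw [div_le_div_iff₀ ht0 hs0]
      rcases lt_or_ge T s with hTs | hsT
      · -- s > T : f s ≥ K
        have h1 : K ≤ f s := hT s hTs.le
        nlinarith
      · rcases lt_or_ge s δ with hsδ | hδs
        · -- small s : f s / s ≥ ε
          have h1 : ε ≤ f s / s := hδε (by rw [Real.dist_eq, sub_zero, abs_of_pos hs0]; exact hsδ) hs0
          rw [le_div_iff₀ hs0] at h1
          have h2 : a ≤ ε := min_le_left _ _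
          nlinarith [mul_le_mul_of_nonneg_right hKat hs0.le,
            mul_le_mul_of_nonneg_right h1 ht0.le,
            mul_le_mul_of_nonneg_right (mul_le_mul_of_nonneg_right h2 ht0.le) hs0.le]
        · -- δ ≤ s ≤ T : f s ≥ f(δ/2) ≥ ε δ/2
          have h1 : f (δ/2) ≤ f s := hmono (by simp only [Set.mem_Ici]; linarith) (by simp only [Set.mem_Ici]; linarith) (by linarith)
          have h2 : a ≤ ε * (δ/2) / T' := min_le_right _ _
          have h3 : s ≤ T' := le_trans hsT (le_max_left _ _)
          have h4 : a * s ≤ ε * (δ/2) := by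
            calc a * s ≤ (ε * (δ/2) / T') * T' := by
                  apply mul_le_mul h2 h3 hs0.le (by positivity)
              _ = ε * (δ/2) := div_mul_cancel₀ _ hT'0.ne'
          nlinarith
    have : K ≤ t * m t := by
      have := mul_le_mul_of_nonneg_left hmt ht0.le
      rwa [mul_div_cancel₀ _ ht0.ne'] at this
    calc M ≤ K := le_max_left _ _
      _ ≤ c t := this
  -- c ≤ f
  have hcle : ∀ r, 0 ≤ r → c r ≤ f r := by
    intro r hr
    rcases hr.eq_or_lt with rfl | hr'
    · have h0 : c 0 = 0 := zero_mul _
      rw [h0]; exact hf0 0 le_rfl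
    · have h1 : m r ≤ f r / r := hmle r r hr' le_rfl
      have := mul_le_mul_of_nonneg_left h1 hr'.le
      rwa [mul_div_cancel₀ _ hr'.ne'] at this
  refine ⟨c, hcnonneg, hcmono, hctop, hcle, ?_⟩
  rintro θ ⟨hθ0, hθ1⟩ r hr
  have h00 : c 0 = 0 := zero_mul _
  rcases hθ0.eq_or_lt with rfl | hθ'
  · simp [h00]
  rcases hr.eq_or_lt with rfl | hr'
  · simp [h00]
  have hθr : 0 < θ * r := mul_pos hθ' hr'
  have h1 : m r ≤ m (θ * r) := hanti (θ*r) r hθr (by nlinarith)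
  show θ * (r * m r) ≤ (θ * r) * m (θ * r)
  nlinarith [hmnonneg r]
end

section
/- Let F: R₊ → R₊ be nondecreasing and unbounded with limsup_{s→0⁺} F(s)/s < ∞. Then there exists a nondecreasing, unbounded function C: R₊ → R₊ with C ≥ F and C(θr) ≤ θ·C(r) for all θ ∈ [0,1] and r ≥ 0. -/
open Filter

/-- Lemma on concave-like majorants: if `F : ℝ₊ → ℝ₊` is nondecreasing,
unbounded, and `limsup_{s→0⁺} F(s)/s < ∞`, then there is a nondecreasing unbounded
`C ≥ F` with `C(θr) ≤ θ·C(r)` for all `θ ∈ [0,1]`, `r ≥ 0`. -/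
theorem exists_scaling_majorant (F : ℝ → ℝ)
    (hF0 : ∀ s, 0 ≤ s → 0 ≤ F s)
    (hmono : MonotoneOn F (Set.Ici (0 : ℝ)))
    (hunb : Tendsto F atTop atTop)
    (hlimsup : ∃ M : ℝ, ∀ᶠ s in nhdsWithin 0 (Set.Ioi 0), F s / s ≤ M) :
    ∃ C : ℝ → ℝ,
      (∀ s, 0 ≤ s → 0 ≤ C s) ∧
      MonotoneOn C (Set.Ici (0 : ℝ)) ∧
      Tendsto C atTop atTop ∧
      (∀ r, 0 ≤ r → F r ≤ C r) ∧
      (∀ θ ∈ Set.Icc (0 : ℝ) 1, ∀ r, 0 ≤ r → C (θ * r) ≤ θ * C r) := by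
  obtain ⟨M, hM⟩ := hlimsup
  rw [eventually_nhdsWithin_iff, Metric.eventually_nhds_iff] at hM
  obtain ⟨δ, hδ, hMδ⟩ := hM
  have hMδ' : ∀ s : ℝ, 0 < s → s < δ → F s / s ≤ M := by
    intro s hs hsδ
    exact hMδ (by simp [Real.dist_eq, abs_of_pos hs, hsδ]) hs
  set g : ℝ → ℝ := fun t => sSup ((fun s => F s / s) '' Set.Ioc 0 t) with hg
  have hbdd : ∀ t : ℝ, 0 < t → BddAbove ((fun s => F s / s) '' Set.Ioc 0 t) := by
    intro t ht
    refine ⟨max M (F t / δ), ?_⟩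
    rintro x ⟨s, ⟨hs0, hst⟩, rfl⟩
    rcases lt_or_ge s δ with h | h
    · exact le_max_of_le_left (hMδ' s hs0 h)
    · refine le_max_of_le_right ?_
      exact div_le_div₀ (hF0 t ht.le)
        (hmono hs0.le (Set.mem_Ici.mpr ht.le) hst) hδ h
  have hne : ∀ t : ℝ, 0 < t → ((fun s => F s / s) '' Set.Ioc 0 t).Nonempty :=
    fun t ht => ⟨F t / t, t, ⟨ht, le_refl t⟩, rfl⟩
  have hgF : ∀ t : ℝ, 0 < t → F t / t ≤ g t := fun t ht =>
    le_csSup (hbdd t ht) ⟨t, ⟨ht, le_refl t⟩, rfl⟩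
  have hg0 : ∀ t : ℝ, 0 < t → 0 ≤ g t := fun t ht =>
    le_trans (div_nonneg (hF0 t ht.le) ht.le) (hgF t ht)
  have hgmono : ∀ a b : ℝ, 0 < a → a ≤ b → g a ≤ g b := by
    intro a b ha hab
    exact csSup_le_csSup (hbdd b (ha.trans_le hab)) (hne a ha)
      (Set.image_mono (Set.Ioc_subset_Ioc_right hab))
  set C : ℝ → ℝ := fun t => t * g t with hC
  have hC0 : ∀ s : ℝ, 0 ≤ s → 0 ≤ C s := by
    intro s hs
    rcases hs.eq_or_lt with h | h
    · simp [hC, ← h]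
    · exact mul_nonneg h.le (hg0 s h)
  have hF00 : F 0 ≤ 0 := by
    have ht : Tendsto (fun s : ℝ => M * s) (nhdsWithin 0 (Set.Ioi 0)) (nhds 0) := by
      have hc : Continuous (fun s : ℝ => M * s) := continuous_const.mul continuous_id
      have h2 := hc.tendsto (0 : ℝ)
      simpa using h2.mono_left nhdsWithin_le_nhds
    refine ge_of_tendsto ht ?_
    filter_upwards [Ioo_mem_nhdsGT_of_mem (Set.left_mem_Ico.2 hδ)] with s hs
    have h1 : F 0 ≤ F s :=
      hmono (Set.mem_Ici.mpr (le_refl 0)) (Set.mem_Ici.mpr hs.1.le) hs.1.le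
    have h2 : F s ≤ M * s := by
      have := hMδ' s hs.1 hs.2
      calc F s = (F s / s) * s := (div_mul_cancel₀ _ hs.1.ne').symm
        _ ≤ M * s := mul_le_mul_of_nonneg_right this hs.1.le
    linarith
  have hFC : ∀ r : ℝ, 0 ≤ r → F r ≤ C r := by
    intro r hr
    rcases hr.eq_or_lt with h | h
    · have : C 0 = 0 := by simp [hC]
      rw [← h]; simpa [this] using hF00
    · calc F r = r * (F r / r) := by rw [mul_div_assoc']; exact (mul_div_cancel_left₀ _ h.ne').symm
        _ ≤ r * g r := mul_le_mul_of_nonneg_left (hgF r h) h.le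
  have hCmono : MonotoneOn C (Set.Ici (0 : ℝ)) := by
    intro a ha b hb hab
    rcases (Set.mem_Ici.mp ha).eq_or_lt with h | h
    · have : C 0 = 0 := by simp [hC]
      rw [← h, this]; exact hC0 b hb
    · exact mul_le_mul hab (hgmono a b h hab) (hg0 a h)
        (le_trans h.le hab)
  have hCunb : Tendsto C atTop atTop := by
    refine tendsto_atTop_mono' atTop ?_ hunb
    filter_upwards [eventually_ge_atTop (0 : ℝ)] with r hr using hFC r hr
  refine ⟨C, hC0, hCmono, hCunb, hFC, ?_⟩
  rintro θ ⟨hθ0, hθ1⟩ r hr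
  rcases hθ0.eq_or_lt with h | hθ
  · rw [← h]; simpa [hC] using mul_nonneg hθ0 (hC0 r hr)
  rcases hr.eq_or_lt with h | hr'
  · rw [← h]; simp [hC]
  · have hθr : 0 < θ * r := mul_pos hθ hr'
    have hgle : g (θ * r) ≤ g r := hgmono _ _ hθr (mul_le_of_le_one_left hr hθ1)
    calc C (θ * r) = θ * r * g (θ * r) := rfl
      _ ≤ θ * r * g r := mul_le_mul_of_nonneg_left hgle hθr.le
      _ = θ * C r := by ring
end

section
/- With q₁,…,q_n pairwise coprime integers greater than 1 and x_m = (q_i^{−m})_{i=1}^n ∈ T^n, the stabilisers Γ_m = Stab(x_m) in SL_n(Z) form a nested decreasing sequence (Γ_{m+1} ⊆ Γ_m) whose intersection over all m ≥ 1 is the trivial group {1}. -/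
open scoped BigOperators

/-- The stabiliser of the point `x_m = (q_i^{-m})_i ∈ ℝⁿ/ℤⁿ` in `SL_n(ℤ)`:
`A` fixes `x_m` iff each coordinate of `A x_m − x_m` is an integer. -/
def torusStab {n : ℕ} (q : Fin n → ℤ) (m : ℕ) :
    Set (Matrix.SpecialLinearGroup (Fin n) ℤ) :=
  {A | ∀ i : Fin n, ∃ k : ℤ,
    (∑ j : Fin n, ((A : Matrix (Fin n) (Fin n) ℤ) i j : ℚ) * ((q j : ℚ) ^ m)⁻¹)
      - ((q i : ℚ) ^ m)⁻¹ = k}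

lemma dvd_all_pow_eq_zero {a b : ℤ} (hb : 1 < b) (h : ∀ m : ℕ, 1 ≤ m → b ^ m ∣ a) :
    a = 0 := by
  by_contra ha
  set m := a.natAbs with hm'
  have hm : 1 ≤ m := Int.natAbs_pos.mpr ha
  have h2 : b ^ m ≤ |a| := Int.le_of_dvd (abs_pos.mpr ha) ((dvd_abs _ _).mpr (h m hm))
  have h3 : (m : ℤ) < 2 ^ m := by exact_mod_cast (Nat.lt_two_pow_self (n := m))
  have h4 : (2 : ℤ) ^ m ≤ b ^ m := pow_le_pow_left₀ (by norm_num) (by omega) m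
  have h5 : |a| = (m : ℤ) := Int.abs_eq_natAbs a
  linarith

lemma mem_torusStab_iff {n : ℕ} (q : Fin n → ℤ) (hq : ∀ i, 1 < q i)
    (hcop : ∀ i j, i ≠ j → IsCoprime (q i) (q j)) (m : ℕ)
    (A : Matrix.SpecialLinearGroup (Fin n) ℤ) :
    A ∈ torusStab q m ↔ ∀ i t : Fin n,
      (q t) ^ m ∣ (A : Matrix (Fin n) (Fin n) ℤ) i t - (if i = t then 1 else 0) := by
  have hq0 : ∀ j, (q j : ℚ) ≠ 0 := fun j => by
    have := hq j
    exact_mod_cast (by omega : q j ≠ 0)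
  have hqp0 : ∀ j, ((q j : ℚ)) ^ m ≠ 0 := fun j => pow_ne_zero _ (hq0 j)
  set Q : ℤ := ∏ l : Fin n, (q l) ^ m with hQ
  set Qe : Fin n → ℤ := fun j => ∏ l ∈ Finset.univ.erase j, (q l) ^ m with hQe
  have hsplit : ∀ j : Fin n, Q = (q j) ^ m * Qe j := fun j => by
    rw [hQ, hQe, ← Finset.mul_prod_erase _ _ (Finset.mem_univ j)]
  constructor
  · intro hA i t
    obtain ⟨k, hk⟩ := hA i
    have hQcast : ∀ j, ((q j : ℚ) ^ m)⁻¹ * (Q : ℚ) = (Qe j : ℚ) := by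
      intro j
      rw [hsplit j]
      push_cast
      rw [← mul_assoc, inv_mul_cancel₀ (hqp0 j), one_mul]
    have e1 : (∑ j : Fin n, ((A : Matrix (Fin n) (Fin n) ℤ) i j : ℚ) * (Qe j : ℚ))
        - (Qe i : ℚ) = (k : ℚ) * (Q : ℚ) := by
      have h := congrArg (· * (Q : ℚ)) hk
      simp only [sub_mul, Finset.sum_mul] at h
      have hterm : ∀ j : Fin n,
          ((A : Matrix (Fin n) (Fin n) ℤ) i j : ℚ) * ((q j : ℚ) ^ m)⁻¹ * (Q : ℚ)
            = ((A : Matrix (Fin n) (Fin n) ℤ) i j : ℚ) * (Qe j : ℚ) := fun j => by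
        rw [mul_assoc, hQcast j]
      simp_rw [hterm, hQcast i] at h
      exact h
    have e2 : (∑ j : Fin n, (A : Matrix (Fin n) (Fin n) ℤ) i j * Qe j) - Qe i = k * Q := by
      exact_mod_cast e1
    have hsum : ∑ j : Fin n, (A : Matrix (Fin n) (Fin n) ℤ) i j * Qe j
        = (A : Matrix (Fin n) (Fin n) ℤ) i t * Qe t
          + ∑ j ∈ Finset.univ.erase t, (A : Matrix (Fin n) (Fin n) ℤ) i j * Qe j := by
      rw [← Finset.add_sum_erase _ _ (Finset.mem_univ t)]
    have hdvdQ : (q t) ^ m ∣ Q := (hsplit t) ▸ dvd_mul_right _ _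
    have hdvdQe : ∀ j : Fin n, j ≠ t → (q t) ^ m ∣ Qe j := fun j hj =>
      Finset.dvd_prod_of_mem _ (Finset.mem_erase.mpr ⟨hj.symm, Finset.mem_univ t⟩)
    have hdvdsum : (q t) ^ m ∣
        ∑ j ∈ Finset.univ.erase t, (A : Matrix (Fin n) (Fin n) ℤ) i j * Qe j :=
      Finset.dvd_sum fun j hj =>
        Dvd.dvd.mul_left (hdvdQe j (Finset.ne_of_mem_erase hj)) _
    have hcopQe : IsCoprime ((q t) ^ m) (Qe t) := by
      rw [hQe]
      exact IsCoprime.prod_right fun l hl =>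
        ((hcop t l (Finset.ne_of_mem_erase hl).symm).pow)
    by_cases hit : i = t
    · subst hit
      have key : (q i) ^ m ∣ ((A : Matrix (Fin n) (Fin n) ℤ) i i - 1) * Qe i := by
        have : ((A : Matrix (Fin n) (Fin n) ℤ) i i - 1) * Qe i
            = k * Q - ∑ j ∈ Finset.univ.erase i, (A : Matrix (Fin n) (Fin n) ℤ) i j * Qe j := by
          rw [sub_mul, one_mul, ← e2, hsum]; ring
        rw [this]
        exact dvd_sub (Dvd.dvd.mul_left hdvdQ _) hdvdsum
      simpa using hcopQe.dvd_of_dvd_mul_right key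
    · have hQei : (q t) ^ m ∣ Qe i := hdvdQe i hit
      have key : (q t) ^ m ∣ (A : Matrix (Fin n) (Fin n) ℤ) i t * Qe t := by
        have : (A : Matrix (Fin n) (Fin n) ℤ) i t * Qe t
            = (k * Q + Qe i) - ∑ j ∈ Finset.univ.erase t, (A : Matrix (Fin n) (Fin n) ℤ) i j * Qe j := by
          rw [← e2, hsum]; ring
        rw [this]
        exact dvd_sub (dvd_add (Dvd.dvd.mul_left hdvdQ _) hQei) hdvdsum
      simpa [hit] using hcopQe.dvd_of_dvd_mul_right key
  · intro h i
    have hc : ∀ t : Fin n, ∃ c : ℤ,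
        (A : Matrix (Fin n) (Fin n) ℤ) i t = (if i = t then 1 else 0) + (q t) ^ m * c := by
      intro t
      obtain ⟨c, hc⟩ := h i t
      exact ⟨c, by omega⟩
    choose c hcv using hc
    refine ⟨∑ j : Fin n, c j, ?_⟩
    have hterm : ∀ j : Fin n,
        ((A : Matrix (Fin n) (Fin n) ℤ) i j : ℚ) * ((q j : ℚ) ^ m)⁻¹
          = (if i = j then ((q j : ℚ) ^ m)⁻¹ else 0) + (c j : ℚ) := by
      intro j
      rw [hcv j]
      push_cast
      rw [add_mul, mul_comm ((q j : ℚ) ^ m), mul_assoc,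
        mul_inv_cancel₀ (hqp0 j), mul_one]
      congr 1
      split <;> simp
    simp_rw [hterm]
    rw [Finset.sum_add_distrib, Finset.sum_ite_eq (Finset.univ) i
      (fun j => ((q j : ℚ) ^ m)⁻¹)]
    simp only [Finset.mem_univ, if_true]
    push_cast
    ring

/-- for pairwise coprime `q_i > 1`, the stabilisers
`Γ_m = Stab(x_m) ⊆ SL_n(ℤ)` are nested and intersect trivially. -/
theorem torus_stabilizers_nested_trivial_intersection {n : ℕ} (q : Fin n → ℤ)
    (hq : ∀ i, 1 < q i) (hcop : ∀ i j, i ≠ j → IsCoprime (q i) (q j)) :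
    (∀ m : ℕ, 1 ≤ m → torusStab q (m + 1) ⊆ torusStab q m) ∧
    (⋂ m ∈ Set.Ici 1, torusStab q m) = {(1 : Matrix.SpecialLinearGroup (Fin n) ℤ)} := by
  constructor
  · intro m _ A hA
    rw [mem_torusStab_iff q hq hcop] at hA ⊢
    intro i t
    exact dvd_trans (pow_dvd_pow _ (Nat.le_succ m)) (hA i t)
  · ext A
    simp only [Set.mem_iInter, Set.mem_singleton_iff, Set.mem_Ici]
    constructor
    · intro h
      have key : ∀ i t : Fin n,
          (A : Matrix (Fin n) (Fin n) ℤ) i t - (if i = t then 1 else 0) = 0 := by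
        intro i t
        refine dvd_all_pow_eq_zero (hq t) fun m hm => ?_
        exact (mem_torusStab_iff q hq hcop m A).mp (h m hm) i t
      apply Subtype.ext
      ext i j
      have := key i j
      simp only [Matrix.SpecialLinearGroup.coe_one, Matrix.one_apply]
      omega
    · intro h m hm
      subst h
      rw [mem_torusStab_iff q hq hcop]
      intro i t
      rcases eq_or_ne i t with rfl | hne
      · simp [Matrix.one_apply]
      · simp [Matrix.one_apply, hne]
end

section
/- Let n ∈ N, p ∈ [1,∞), a, b > 0, and let (X_i, d_i), 1 ≤ i ≤ n, be metric spaces with d_i(x,x') ≥ a for all x ≠ x'. Suppose ψ_i: X_i → ℓ_p satisfy ρ₋(d_i(x,x')) ≤ ‖ψ_i(x) − ψ_i(x')‖_p ≤ ρ₊(d_i(x,x')) for nondecreasing unbounded ρ₋, ρ₊: [a,∞) → [b,∞). Then there exist nondecreasing unbounded functions c, C: [a,∞) → [b,∞) (depending only on ρ₋ and ρ₊ respectively) and a map ψ: ∏ X_i → ℓ_p such that for all x = (x_i), x' = (x_i') with x ≠ x': (b^{p−1}·c(d(x,x')))^{1/p} ≤ ‖ψ(x) − ψ(x')‖_p ≤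 C(d(x,x')), where d(x,x') = ∑_i d_i(x_i, x_i'). -/
open scoped BigOperators
open Filter

set_option maxHeartbeats 1000000

/-- embeddings of product spaces: if each uniformly discrete `X_i`
embeds into `ℓ_p` with uniform control functions `ρ₋, ρ₊ : [a,∞) → [b,∞)`, then the
product `∏ X_i` with the sum metric embeds into `ℓ_p` with control
`(b^{p−1}·c(d))^{1/p}` from below and `C(d)` from above. -/
theorem product_embedding_into_lp {n : ℕ} (p : ENNReal) [Fact (1 ≤ p)] (hp : p ≠ ⊤)
    (a b : ℝ) (ha : 0 < a) (hb : 0 < b)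
    (X : Fin n → Type*) [∀ i, MetricSpace (X i)]
    (hdisc : ∀ i, ∀ x x' : X i, x ≠ x' → a ≤ dist x x')
    (ρminus ρplus : ℝ → ℝ)
    (hρm_mono : MonotoneOn ρminus (Set.Ici a)) (hρp_mono : MonotoneOn ρplus (Set.Ici a))
    (hρm_unb : Tendsto ρminus atTop atTop) (hρp_unb : Tendsto ρplus atTop atTop)
    (hρm_b : ∀ r, a ≤ r → b ≤ ρminus r) (hρp_b : ∀ r, a ≤ r → b ≤ ρplus r)
    (ψ : ∀ i, X i → lp (fun _ : ℕ => ℝ) p)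
    (hψ : ∀ i, ∀ x x' : X i, x ≠ x' →
      ρminus (dist x x') ≤ ‖ψ i x - ψ i x'‖ ∧ ‖ψ i x - ψ i x'‖ ≤ ρplus (dist x x')) :
    ∃ (c C : ℝ → ℝ) (Ψ : (∀ i, X i) → lp (fun _ : ℕ => ℝ) p),
      MonotoneOn c (Set.Ici a) ∧ Tendsto c atTop atTop ∧ (∀ r, a ≤ r → b ≤ c r) ∧
      MonotoneOn C (Set.Ici a) ∧ Tendsto C atTop atTop ∧ (∀ r, a ≤ r → b ≤ C r) ∧
      ∀ x x' : ∀ i, X i, x ≠ x' →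
        (b ^ (p.toReal - 1) * c (∑ i, dist (x i) (x' i))) ^ (1 / p.toReal)
            ≤ ‖Ψ x - Ψ x'‖ ∧
        ‖Ψ x - Ψ x'‖ ≤ C (∑ i, dist (x i) (x' i)) := by
  -- basic facts about q := p.toReal
  have hq1 : 1 ≤ p.toReal := by
    have := (Fact.out : (1 : ENNReal) ≤ p)
    have h := ENNReal.toReal_mono hp this
    simpa using h
  have hq0 : 0 < p.toReal := lt_of_lt_of_le one_pos hq1
  set q := p.toReal with hqdef
  rcases Nat.eq_zero_or_pos n with hn0 | hnpos
  · -- degenerate case n = 0 : the product is a singleton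
    subst hn0
    refine ⟨fun r => max b r, fun r => max b r, fun _ => 0, ?_, ?_, ?_, ?_, ?_, ?_, ?_⟩
    · exact fun r _ s _ h => max_le_max le_rfl h
    · exact tendsto_atTop_mono (fun r => le_max_right b r) tendsto_id
    · exact fun r _ => le_max_left _ _
    · exact fun r _ s _ h => max_le_max le_rfl h
    · exact tendsto_atTop_mono (fun r => le_max_right b r) tendsto_id
    · exact fun r _ => le_max_left _ _
    · intro x x' hne
      exact absurd (funext fun i => i.elim0) hne
  -- main case n ≥ 1
  haveI : Nonempty (Fin n) := Fin.pos_iff_nonempty.1 hnpos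
  haveI : Denumerable (Fin n × ℕ) := Denumerable.ofEncodableOfInfinite _
  set e : Fin n × ℕ ≃ ℕ := Denumerable.eqv (Fin n × ℕ) with he
  have hnR : (1 : ℝ) ≤ (n : ℝ) := by exact_mod_cast hnpos
  have hnR0 : (0 : ℝ) < (n : ℝ) := lt_of_lt_of_le one_pos hnR
  -- the raw interleaved function
  set F : (∀ i, X i) → ℕ → ℝ :=
    fun x k => ψ (e.symm k).1 (x (e.symm k).1) (e.symm k).2 with hF
  -- summability of slice functions
  have slice_summable : ∀ (g : ∀ i, lp (fun _ : ℕ => ℝ) p),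
      Summable fun im : Fin n × ℕ => ‖(g im.1 : ℕ → ℝ) im.2‖ ^ q := by
    intro g
    refine (summable_prod_of_nonneg ?_).2 ⟨?_, ?_⟩
    · intro im; exact Real.rpow_nonneg (norm_nonneg _) _
    · intro i; exact (lp.hasSum_norm hq0 (g i)).summable
    · exact Summable.of_finite
  have memF : ∀ x : ∀ i, X i, Memℓp (F x) p := by
    intro x
    apply memℓp_gen
    have h := slice_summable (fun i => ψ i (x i))
    exact (Equiv.summable_iff e.symm
      (f := fun im : Fin n × ℕ => ‖(ψ im.1 (x im.1) : ℕ → ℝ) im.2‖ ^ q)).2 h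
  set Ψ : (∀ i, X i) → lp (fun _ : ℕ => ℝ) p := fun x => ⟨F x, memF x⟩ with hΨ
  -- the key norm identity
  have key : ∀ x x' : ∀ i, X i,
      ‖Ψ x - Ψ x'‖ ^ q = ∑ i, ‖ψ i (x i) - ψ i (x' i)‖ ^ q := by
    intro x x'
    have hsub : ∀ k : ℕ, (Ψ x - Ψ x' : lp (fun _ : ℕ => ℝ) p) k
        = ((ψ (e.symm k).1 (x (e.symm k).1) - ψ (e.symm k).1 (x' (e.symm k).1)
            : lp (fun _ : ℕ => ℝ) p) : ℕ → ℝ) (e.symm k).2 := by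
      intro k
      simp [hΨ, hF, lp.coeFn_sub, Pi.sub_apply]
      rfl
    have hG := slice_summable (fun i => ψ i (x i) - ψ i (x' i))
    have hGi : ∀ i : Fin n, Summable fun m : ℕ =>
        (fun im : Fin n × ℕ =>
          ‖((ψ im.1 (x im.1) - ψ im.1 (x' im.1) : lp (fun _ : ℕ => ℝ) p) : ℕ → ℝ) im.2‖ ^ q)
          (i, m) :=
      fun i => (lp.hasSum_norm hq0 (ψ i (x i) - ψ i (x' i))).summable
    calc ‖Ψ x - Ψ x'‖ ^ q
        = ∑' k : ℕ, ‖(Ψ x - Ψ x' : lp (fun _ : ℕ => ℝ) p) k‖ ^ q :=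
          lp.norm_rpow_eq_tsum hq0 _
      _ = ∑' k : ℕ, (fun im : Fin n × ℕ =>
            ‖((ψ im.1 (x im.1) - ψ im.1 (x' im.1) : lp (fun _ : ℕ => ℝ) p) : ℕ → ℝ) im.2‖ ^ q)
            (e.symm k) := tsum_congr fun k => by rw [hsub k]
      _ = ∑' im : Fin n × ℕ, (fun im : Fin n × ℕ =>
            ‖((ψ im.1 (x im.1) - ψ im.1 (x' im.1) : lp (fun _ : ℕ => ℝ) p) : ℕ → ℝ) im.2‖ ^ q)
            im := e.symm.tsum_eq (fun im : Fin n × ℕ =>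
            ‖((ψ im.1 (x im.1) - ψ im.1 (x' im.1) : lp (fun _ : ℕ => ℝ) p) : ℕ → ℝ) im.2‖ ^ q)
      _ = ∑' (i : Fin n) (m : ℕ),
            ‖((ψ i (x i) - ψ i (x' i) : lp (fun _ : ℕ => ℝ) p) : ℕ → ℝ) m‖ ^ q :=
          Summable.tsum_prod' hG hGi
      _ = ∑ i : Fin n, ∑' m : ℕ,
            ‖((ψ i (x i) - ψ i (x' i) : lp (fun _ : ℕ => ℝ) p) : ℕ → ℝ) m‖ ^ q :=
          tsum_fintype _
      _ = ∑ i, ‖ψ i (x i) - ψ i (x' i)‖ ^ q :=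
          Finset.sum_congr rfl fun i _ => (lp.hasSum_norm hq0 _).tsum_eq
  -- define c and C
  set c : ℝ → ℝ := fun r => ρminus (max a (r / n)) ^ q / b ^ (q - 1) with hc
  set C : ℝ → ℝ := fun r => n * ρplus (max a r) with hC
  have hbq : (0 : ℝ) < b ^ (q - 1) := Real.rpow_pos_of_pos hb _
  have hmax_mem : ∀ r : ℝ, a ≤ max a (r / n) := fun r => le_max_left _ _
  refine ⟨c, C, Ψ, ?_, ?_, ?_, ?_, ?_, ?_, ?_⟩
  · -- c monotone on [a, ∞)
    intro r hr s hs hrs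
    have h1 : max a (r / n) ≤ max a (s / n) :=
      max_le_max le_rfl (div_le_div_of_nonneg_right hrs hnR0.le)
    have h2 : ρminus (max a (r / n)) ≤ ρminus (max a (s / n)) :=
      hρm_mono (hmax_mem r) (hmax_mem s) h1
    have h3 : 0 ≤ ρminus (max a (r / n)) := le_trans hb.le (hρm_b _ (hmax_mem r))
    exact div_le_div_of_nonneg_right (Real.rpow_le_rpow h3 h2 hq0.le) hbq.le
  · -- c tends to atTop
    have h1 : Tendsto (fun r : ℝ => r / n) atTop atTop :=
      tendsto_id.atTop_div_const hnR0
    have h2 : Tendsto (fun r : ℝ => max a (r / n)) atTop atTop :=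
      tendsto_atTop_mono (fun r => le_max_right _ _) h1
    have h3 : Tendsto (fun r : ℝ => ρminus (max a (r / n))) atTop atTop := hρm_unb.comp h2
    have h4 : Tendsto (fun r : ℝ => ρminus (max a (r / n)) ^ q) atTop atTop :=
      (tendsto_rpow_atTop hq0).comp h3
    exact h4.atTop_div_const hbq
  · -- b ≤ c r
    intro r _
    have h2 : b ^ q ≤ ρminus (max a (r / n)) ^ q :=
      Real.rpow_le_rpow hb.le (hρm_b _ (hmax_mem r)) hq0.le
    have h3 : b = b ^ q / b ^ (q - 1) := by
      rw [← Real.rpow_sub hb]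
      norm_num
    rw [h3]
    exact div_le_div_of_nonneg_right h2 hbq.le
  · -- C monotone on [a, ∞)
    intro r hr s hs hrs
    have := hρp_mono (le_max_left a r) (le_max_left a s) (max_le_max le_rfl hrs)
    exact mul_le_mul_of_nonneg_left this (by positivity)
  · -- C tends to atTop
    have h2 : Tendsto (fun r : ℝ => max a r) atTop atTop :=
      tendsto_atTop_mono (fun r => le_max_right _ _) tendsto_id
    have h3 : Tendsto (fun r : ℝ => ρplus (max a r)) atTop atTop := hρp_unb.comp h2
    exact Tendsto.const_mul_atTop hnR0 h3
  · -- b ≤ C r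
    intro r _
    have h1 : b ≤ ρplus (max a r) := hρp_b _ (le_max_left _ _)
    calc b ≤ ρplus (max a r) := h1
      _ = 1 * ρplus (max a r) := (one_mul _).symm
      _ ≤ n * ρplus (max a r) :=
        mul_le_mul_of_nonneg_right hnR (le_trans hb.le h1)
  · -- the main estimate
    intro x x' hne
    set d : ℝ := ∑ i, dist (x i) (x' i) with hd
    obtain ⟨j, hj⟩ := Function.ne_iff.1 hne
    have hdj : a ≤ dist (x j) (x' j) := hdisc j _ _ hj
    have hda : a ≤ d := le_trans hdj
      (Finset.single_le_sum (fun i _ => dist_nonneg) (Finset.mem_univ j))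
    -- pick an index realizing the max distance
    obtain ⟨i₀, -, hi₀⟩ := Finset.exists_max_image Finset.univ
      (fun i => dist (x i) (x' i)) ⟨j, Finset.mem_univ j⟩
    have hdi₀ : a ≤ dist (x i₀) (x' i₀) :=
      le_trans hdj (hi₀ j (Finset.mem_univ j))
    have hxi₀ : x i₀ ≠ x' i₀ := by
      intro h
      rw [h, dist_self] at hdi₀
      exact absurd (lt_of_lt_of_le ha hdi₀) (lt_irrefl 0)
    have hdle : d ≤ n * dist (x i₀) (x' i₀) := by
      calc d ≤ ∑ _i : Fin n, dist (x i₀) (x' i₀) :=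
          Finset.sum_le_sum (fun i _ => hi₀ i (Finset.mem_univ i))
        _ = n * dist (x i₀) (x' i₀) := by
          rw [Finset.sum_const, Finset.card_univ, Fintype.card_fin, nsmul_eq_mul]
    have hmaxle : max a (d / n) ≤ dist (x i₀) (x' i₀) :=
      max_le hdi₀ ((div_le_iff₀' hnR0).2 hdle)
    -- lower bound
    have hρm_pos : 0 ≤ ρminus (max a (d / n)) := le_trans hb.le (hρm_b _ (hmax_mem d))
    have hlow : ρminus (max a (d / n)) ≤ ‖Ψ x - Ψ x'‖ := by
      have h1 : ρminus (max a (d / n)) ≤ ‖ψ i₀ (x i₀) - ψ i₀ (x' i₀)‖ :=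
        le_trans (hρm_mono (hmax_mem d) (le_trans (hmax_mem d) hmaxle) hmaxle)
          (hψ i₀ _ _ hxi₀).1
      have h2 : ‖ψ i₀ (x i₀) - ψ i₀ (x' i₀)‖ ^ q ≤ ‖Ψ x - Ψ x'‖ ^ q := by
        rw [key x x']
        exact Finset.single_le_sum
          (f := fun i => ‖ψ i (x i) - ψ i (x' i)‖ ^ q)
          (fun i _ => Real.rpow_nonneg (norm_nonneg _) _) (Finset.mem_univ i₀)
      have h3 : ‖ψ i₀ (x i₀) - ψ i₀ (x' i₀)‖ ≤ ‖Ψ x - Ψ x'‖ :=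
        (Real.rpow_le_rpow_iff (norm_nonneg _) (norm_nonneg _) hq0).1 h2
      exact le_trans h1 h3
    constructor
    · -- rewrite (b^(q-1) * c d)^(1/q) = ρminus (max a (d/n))
      have heq : b ^ (q - 1) * c d = ρminus (max a (d / n)) ^ q := by
        rw [hc]
        field_simp
      rw [heq, ← Real.rpow_mul hρm_pos, mul_one_div_cancel hq0.ne', Real.rpow_one]
      exact hlow
    · -- upper bound
      have hub : ‖Ψ x - Ψ x'‖ ^ q ≤ ((n : ℝ) * ρplus d) ^ q := by
        rw [key x x']
        have hterm : ∀ i : Fin n, ‖ψ i (x i) - ψ i (x' i)‖ ^ q ≤ ρplus d ^ q := by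
          intro i
          by_cases hxi : x i = x' i
          · rw [hxi, sub_self]
            simp only [norm_zero]
            rw [Real.zero_rpow hq0.ne']
            exact Real.rpow_nonneg (le_trans hb.le (hρp_b d hda)) _
          · have h1 : ‖ψ i (x i) - ψ i (x' i)‖ ≤ ρplus (dist (x i) (x' i)) :=
              (hψ i _ _ hxi).2
            have hdi : a ≤ dist (x i) (x' i) := hdisc i _ _ hxi
            have h2 : dist (x i) (x' i) ≤ d :=
              Finset.single_le_sum (fun i _ => dist_nonneg) (Finset.mem_univ i)
            have h3 : ρplus (dist (x i) (x' i)) ≤ ρplus d :=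
              hρp_mono hdi (le_trans hdi h2) h2
            exact Real.rpow_le_rpow (norm_nonneg _) (le_trans h1 h3) hq0.le
        calc (∑ i, ‖ψ i (x i) - ψ i (x' i)‖ ^ q) ≤ ∑ _i : Fin n, ρplus d ^ q :=
            Finset.sum_le_sum (fun i _ => hterm i)
          _ = n * ρplus d ^ q := by
            rw [Finset.sum_const, Finset.card_univ, Fintype.card_fin, nsmul_eq_mul]
          _ ≤ (n : ℝ) ^ q * ρplus d ^ q := by
            refine mul_le_mul_of_nonneg_right ?_ (Real.rpow_nonneg
              (le_trans hb.le (hρp_b d hda)) _)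
            calc (n : ℝ) = (n : ℝ) ^ (1 : ℝ) := (Real.rpow_one _).symm
              _ ≤ (n : ℝ) ^ q := Real.rpow_le_rpow_of_exponent_le hnR (by simpa using hq1)
          _ = ((n : ℝ) * ρplus d) ^ q :=
            (Real.mul_rpow (le_of_lt hnR0) (le_trans hb.le (hρp_b d hda))).symm
      have hfin : ‖Ψ x - Ψ x'‖ ≤ (n : ℝ) * ρplus d :=
        (Real.rpow_le_rpow_iff (norm_nonneg _)
          (mul_nonneg hnR0.le (le_trans hb.le (hρp_b d hda))) hq0).1 hub
      have : C d = n * ρplus d := by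
        rw [hC]
        simp only [max_eq_right hda]
      rw [this]
      exact hfin
end
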